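/- Let ψ be a strict Archimedean generator, F̄_0,…,F̄_d survival functions, λ_0,…,λ_d>0, and K:[0,∞)→[0,∞) a continuous strictly increasing bijection such that ψ^{-1}(F̄_i(x)) = λ_i·K(x) for all x≥0 and all i=0,1,…,d. Set α_i = λ_0/(λ_i+λ_0), F̄_{τ_k}(t) = ψ((λ_0+λ_k)K(t)), and F̄_τ(t_1,…,t_d) = ψ( λ_0K(max_{1≤k≤d} t_k) + ∑_{k=1}^d λ_kK(t_k) ). Define Ĉ:(0,1]^d→(0,1] by Ĉ(u_1,…,u_d) = ψ( ψ^{-1}(u_j) + ∑_{k=1,k≠j}^d (1−α_k)ψ^{-1}(u_k) ), where j is the smallest index attaining max_{1≤i≤d} α_i·ψ^{-1}(u_i). Then F̄_τ(t_1,…,t_d) = Ĉ( F̄_{τ_1}(t_1), …, F̄_{τ_d}(t_d) ) for all (t_1,…,t_d)∈[0,∞)^d; in particular the survival copula of the default times does not depend on K. -/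

import Mathlib

open Set MeasureTheory

/-- A survival function: continuous, strictly decreasing on `[0,∞)`, equal to `1` at `0`,
tending to `0` at `+∞`, with values in `(0,1]` on `[0,∞)`. -/
structure SurvFun where
  toFun : ℝ → ℝ
  continuousOn : ContinuousOn toFun (Ici 0)
  strictAntiOn : StrictAntiOn toFun (Ici 0)
  map_zero : toFun 0 = 1
  tendsto_atTop : Filter.Tendsto toFun Filter.atTop (nhds 0)
  mapsTo : MapsTo toFun (Ici 0) (Ioc 0 1)

/-- A strict Archimedean generator: a continuous strictly decreasing bijection of `[0,∞)`
onto `(0,1]` with `ψ 0 = 1` and `ψ x → 0` as `x → ∞`, together with its inverse. -/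
structure ArchGen extends SurvFun where
  bijOn : BijOn toFun (Ici 0) (Ioc 0 1)
  inv : ℝ → ℝ
  inv_mapsTo : MapsTo inv (Ioc 0 1) (Ici 0)
  leftInv : ∀ x ∈ Ici (0:ℝ), inv (toFun x) = x
  rightInv : ∀ u ∈ Ioc (0:ℝ) 1, toFun (inv u) = u

/-- The smallest index attaining the maximum of `g` over `Fin (n+1)`. -/
noncomputable def argmaxMin {n : ℕ} (g : Fin (n + 1) → ℝ) : Fin (n + 1) :=
  (Finset.univ.filter fun i => ∀ i', g i' ≤ g i).min' (by
    obtain ⟨j, -, hj⟩ :=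
      Finset.exists_max_image (Finset.univ : Finset (Fin (n + 1))) g ⟨0, Finset.mem_univ 0⟩
    exact ⟨j, Finset.mem_filter.2 ⟨Finset.mem_univ j, fun i' => hj i' (Finset.mem_univ i')⟩⟩)

lemma argmaxMin_spec {n : ℕ} (g : Fin (n + 1) → ℝ) : ∀ i, g i ≤ g (argmaxMin g) := by
  have h := Finset.min'_mem (Finset.univ.filter fun i => ∀ i', g i' ≤ g i)
    (by
      obtain ⟨j, -, hj⟩ :=
        Finset.exists_max_image (Finset.univ : Finset (Fin (n + 1))) g ⟨0, Finset.mem_univ 0⟩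
      exact ⟨j, Finset.mem_filter.2 ⟨Finset.mem_univ j, fun i' => hj i' (Finset.mem_univ i')⟩⟩)
  exact (Finset.mem_filter.1 h).2

/-- under the proportionality restriction, the survival copula of the
default times takes a Marshall-Olkin-type form not depending on `K`. -/
theorem survival_copula_linear_distortion
    {d : ℕ} (G : ArchGen) (F0 : SurvFun) (F : Fin (d + 1) → SurvFun)
    (lam0 : ℝ) (lam : Fin (d + 1) → ℝ) (hlam0 : 0 < lam0) (hlam : ∀ i, 0 < lam i)
    (K : ℝ → ℝ) (hKc : ContinuousOn K (Ici 0)) (hKm : StrictMonoOn K (Ici 0))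
    (hKb : BijOn K (Ici 0) (Ici 0))
    (hprop0 : ∀ x ∈ Ici (0:ℝ), G.inv (F0.toFun x) = lam0 * K x)
    (hprop : ∀ i, ∀ x ∈ Ici (0:ℝ), G.inv ((F i).toFun x) = lam i * K x) :
    ∀ t : Fin (d + 1) → ℝ, (∀ k, 0 ≤ t k) →
      G.toFun (lam0 * K (Finset.univ.sup' Finset.univ_nonempty t)
          + ∑ k, lam k * K (t k))
        = (fun u : Fin (d + 1) → ℝ =>
            let α : Fin (d + 1) → ℝ := fun i => lam0 / (lam i + lam0)
            let j : Fin (d + 1) := argmaxMin fun i => α i * G.inv (u i)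
            G.toFun (G.inv (u j) + ∑ k ∈ Finset.univ.erase j, (1 - α k) * G.inv (u k)))
          (fun k => G.toFun ((lam0 + lam k) * K (t k))) := by
  intro t ht
  simp only []
  set α : Fin (d + 1) → ℝ := fun i => lam0 / (lam i + lam0) with hα
  set u : Fin (d + 1) → ℝ := fun k => G.toFun ((lam0 + lam k) * K (t k)) with hu
  have hKnn : ∀ k, 0 ≤ K (t k) := fun k => hKb.mapsTo (ht k)
  have hpos : ∀ k, (0:ℝ) < lam0 + lam k := fun k => add_pos hlam0 (hlam k)
  have hinv : ∀ k, G.inv (u k) = (lam0 + lam k) * K (t k) := fun k =>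
    G.leftInv _ (mul_nonneg (hpos k).le (hKnn k))
  have hαinv : ∀ k, α k * G.inv (u k) = lam0 * K (t k) := by
    intro k
    have hne : lam k + lam0 ≠ 0 := (add_pos (hlam k) hlam0).ne'
    rw [hinv k, hα, add_comm lam0 (lam k)]
    field_simp
  set j : Fin (d + 1) := argmaxMin fun i => α i * G.inv (u i) with hj
  have hmax : ∀ i, lam0 * K (t i) ≤ lam0 * K (t j) := by
    intro i
    have := argmaxMin_spec (fun i => α i * G.inv (u i)) i
    rwa [hαinv, hαinv] at this
  have hKle : ∀ i, K (t i) ≤ K (t j) := fun i =>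
    le_of_mul_le_mul_left (hmax i) hlam0
  have hM : K (Finset.univ.sup' Finset.univ_nonempty t) = K (t j) := by
    obtain ⟨m, -, hm⟩ := Finset.exists_mem_eq_sup'
      (Finset.univ_nonempty : (Finset.univ : Finset (Fin (d+1))).Nonempty) t
    refine le_antisymm (by rw [hm]; exact hKle m) ?_
    have htj : t j ≤ Finset.univ.sup' Finset.univ_nonempty t :=
      Finset.le_sup' t (Finset.mem_univ j)
    have hMnn : Finset.univ.sup' Finset.univ_nonempty t ∈ Ici (0:ℝ) := by
      rw [hm]; exact ht m
    exact hKm.monotoneOn (ht j) hMnn htj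
  congr 1
  rw [hinv j, hM]
  have hterm : ∀ k, (1 - α k) * G.inv (u k) = lam k * K (t k) := by
    intro k
    have hne : lam k + lam0 ≠ 0 := (add_pos (hlam k) hlam0).ne'
    rw [hinv k, hα, add_comm lam0 (lam k)]
    field_simp
    ring
  rw [Finset.sum_congr rfl (fun k _ => hterm k),
    ← Finset.add_sum_erase Finset.univ (fun k => lam k * K (t k)) (Finset.mem_univ j)]
  ring
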